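/- Consider iterates x_t = (1 − λη_t) x_{t−1} − η_t Δ_t with λη_t < 1 and ‖Δ_t‖ ≤ 1 for all t ≥ 1. Then for every t, ‖x_t‖ − 1/λ ≤ max( e^{−λ Σ_{i=1}^t η_i} (‖x_0‖ − 1/λ), 0 ). -/

import Mathlib

open scoped RealInnerProductSpace BigOperators
open Filter Finset

/-- `N` is a norm on `ℝ^d`. -/
def IsNorm {d : ℕ} (N : EuclideanSpace ℝ (Fin d) → ℝ) : Prop :=
  (∀ x, N x = 0 ↔ x = 0) ∧ (∀ (c : ℝ) (x), N (c • x) = |c| * N x) ∧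
    (∀ x y, N (x + y) ≤ N x + N y)

/-- `D` is the dual norm of `N`: `D g` is the maximum of `⟪g, x⟫` over the unit ball of `N`
(the supremum is attained in finite dimension). -/
def IsDualNorm {d : ℕ} (N D : EuclideanSpace ℝ (Fin d) → ℝ) : Prop :=
  ∀ g, IsGreatest {r : ℝ | ∃ x, N x ≤ 1 ∧ r = ⟪g, x⟫} (D g)

/-- `g` is a subgradient of the convex function `f` at `x`. -/
def SubgradientAt {d : ℕ} (f : EuclideanSpace ℝ (Fin d) → ℝ)
    (x g : EuclideanSpace ℝ (Fin d)) : Prop :=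
  ∀ y, f x + ⟪y - x, g⟫ ≤ f y

/-- for iterates `x_t = (1 - λη_t) x_{t-1} - η_t Δ_t` with `λη_t < 1` and
`N Δ_t ≤ 1`, we have `N x_t - 1/λ ≤ max (exp(-λ Σ_{i=1}^t η_i) (N x_0 - 1/λ)) 0`. -/
theorem norm_iterate_le_max_exp {d : ℕ} (N : EuclideanSpace ℝ (Fin d) → ℝ) (hN : IsNorm N)
    (lam : ℝ) (hlam : 0 < lam) (η : ℕ → ℝ) (Δ x : ℕ → EuclideanSpace ℝ (Fin d))
    (hη : ∀ t, 1 ≤ t → 0 < η t) (hle : ∀ t, 1 ≤ t → lam * η t < 1)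
    (hΔ : ∀ t, 1 ≤ t → N (Δ t) ≤ 1)
    (hx : ∀ t, 1 ≤ t → x t = (1 - lam * η t) • x (t - 1) - η t • Δ t) :
    ∀ t, N (x t) - 1 / lam ≤
      max (Real.exp (-lam * ∑ i ∈ Finset.Icc 1 t, η i) * (N (x 0) - 1 / lam)) 0 := by
  obtain ⟨hN0, hNsmul, hNadd⟩ := hN
  have hNneg : ∀ v, N (-v) = N v := fun v => by
    have := hNsmul (-1) v; simpa using this
  have hNnonneg : ∀ v, 0 ≤ N v := fun v => by
    have h := hNadd v (-v)
    rw [hNneg] at h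
    have h0 : N 0 = 0 := (hN0 0).mpr rfl
    simp [h0] at h; linarith
  intro t
  induction t with
  | zero => simpa using le_max_left (N (x 0) - 1 / lam) 0
  | succ t ih =>
    have ht1 : 1 ≤ t + 1 := Nat.le_add_left 1 t
    have hηt := hη (t+1) ht1
    have hlet := hle (t+1) ht1
    have hΔt := hΔ (t+1) ht1
    have hxt := hx (t+1) ht1
    simp only [Nat.add_sub_cancel] at hxt
    have key : N (x (t+1)) ≤ (1 - lam * η (t+1)) * N (x t) + η (t+1) := by
      rw [hxt]
      calc N ((1 - lam*η (t+1)) • x t - η (t+1) • Δ (t+1))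
          ≤ N ((1 - lam*η (t+1)) • x t) + N (-(η (t+1) • Δ (t+1))) := by
            rw [sub_eq_add_neg]; exact hNadd _ _
        _ = |1 - lam*η (t+1)| * N (x t) + |η (t+1)| * N (Δ (t+1)) := by
            rw [hNneg, hNsmul, hNsmul]
        _ ≤ (1 - lam*η (t+1)) * N (x t) + η (t+1) := by
            rw [abs_of_nonneg (by linarith), abs_of_pos hηt]
            nlinarith [hNnonneg (x t)]
    have key2 : N (x (t+1)) - 1/lam ≤ (1 - lam*η (t+1)) * (N (x t) - 1/lam) := by
      have heq : (1 - lam*η (t+1)) * (N (x t) - 1/lam)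
          = (1 - lam*η (t+1)) * N (x t) + η (t+1) - 1/lam := by
        field_simp; ring
      linarith [key]
    have hsum : ∑ i ∈ Finset.Icc 1 (t+1), η i = (∑ i ∈ Finset.Icc 1 t, η i) + η (t+1) :=
      Finset.sum_Icc_succ_top ht1 η
    set E := Real.exp (-lam * ∑ i ∈ Finset.Icc 1 t, η i) with hE
    set c := N (x 0) - 1/lam with hc
    rcases le_or_gt (N (x t) - 1/lam) 0 with h | h
    · have h1 : N (x (t+1)) - 1/lam ≤ 0 :=
        le_trans key2 (mul_nonpos_of_nonneg_of_nonpos (by linarith) h)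
      exact le_trans h1 (le_max_right _ _)
    · have h1 : N (x t) - 1/lam ≤ E * c := by
        rcases le_or_gt (E*c) 0 with h2 | h2
        · exfalso; have := ih; rw [max_eq_right h2] at this; linarith
        · have := ih; rwa [max_eq_left h2.le] at this
      have h2 : (1 - lam*η (t+1)) ≤ Real.exp (-(lam*η (t+1))) := by
        have := Real.add_one_le_exp (-(lam*η (t+1))); linarith
      calc N (x (t+1)) - 1/lam ≤ (1-lam*η (t+1))*(N (x t)-1/lam) := key2
        _ ≤ Real.exp (-(lam*η (t+1))) * (E*c) :=
            mul_le_mul h2 h1 h.le (Real.exp_nonneg _)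
        _ = Real.exp (-lam * ∑ i ∈ Finset.Icc 1 (t+1), η i) * c := by
            rw [hsum, hE, ← mul_assoc, ← Real.exp_add]; ring_nf
        _ ≤ max (Real.exp (-lam * ∑ i ∈ Finset.Icc 1 (t+1), η i) * c) 0 := le_max_left _ _
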